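/- arXiv:1401.3128 — 4 statements merged into one kernel-verified Lean document; each statement's English description precedes it below -/
import Mathlib

section
/- Suppose g and h are continuous functions on ℂ, and for each natural number n, z_n ∈ ℂ satisfies z_n^n · g(z_n) + h(z_n) = 0. If the sequence (z_n) converges to z₀ with |z₀| > 1, then g(z₀) = 0; and if |z₀| < 1, then h(z₀) = 0. -/
open Filter

/-- If `g, h : ℂ → ℂ` are continuous, `z_n` is a root of `fₙ(t) = tⁿ·g(t) + h(t)`
for every `n`, and `z_n → z₀`, then `g(z₀) = 0` if `|z₀| > 1`, while `h(z₀) = 0`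
if `|z₀| < 1`. -/
theorem root_limit_of_pow_mul_add (g h : ℂ → ℂ) (hg : Continuous g) (hh : Continuous h)
    (z : ℕ → ℂ) (hroot : ∀ n : ℕ, (z n) ^ n * g (z n) + h (z n) = 0)
    (z₀ : ℂ) (hlim : Tendsto z atTop (nhds z₀)) :
    (1 < ‖z₀‖ → g z₀ = 0) ∧ (‖z₀‖ < 1 → h z₀ = 0) := by
  have habs : Tendsto (fun n => ‖z n‖) atTop (nhds (‖z₀‖)) :=
    (continuous_norm.tendsto z₀).comp hlim
  constructor
  · intro h1
    set r : ℝ := (‖z₀‖ + 1) / 2 with hr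
    have hr1 : 1 < r := by rw [hr]; linarith
    have hrz : r < ‖z₀‖ := by rw [hr]; linarith
    have hev : ∀ᶠ n in atTop, r < ‖z n‖ :=
      habs.eventually (eventually_gt_nhds hrz)
    -- (z n ^ n)⁻¹ → 0
    have hinv : Tendsto (fun n => ((z n) ^ n)⁻¹) atTop (nhds 0) := by
      apply squeeze_zero_norm' (a := fun n => (r⁻¹) ^ n)
      · filter_upwards [hev] with n hn
        have hrn : 0 < r := by linarith
        have hzn : (0:ℝ) < ‖z n‖ := lt_trans hrn hn
        rw [norm_inv, norm_pow, ← inv_pow]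
        apply pow_le_pow_left₀ (by positivity)
        exact inv_anti₀ hrn hn.le
      · exact tendsto_pow_atTop_nhds_zero_of_norm_lt_one (by
          rw [Real.norm_eq_abs, abs_of_pos (by positivity)]
          exact inv_lt_one_of_one_lt₀ hr1)
    have hg0 : Tendsto (fun n => g (z n)) atTop (nhds 0) := by
      have key : Tendsto (fun n => -h (z n) * ((z n) ^ n)⁻¹) atTop (nhds 0) := by
        have := (((hh.tendsto z₀).comp hlim).neg).mul hinv
        simpa using this
      apply key.congr'
      filter_upwards [hev] with n hn
      have hzn : (z n) ^ n ≠ 0 := by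
        apply pow_ne_zero
        intro hz0
        rw [hz0] at hn
        simp at hn
        linarith
      field_simp
      have := hroot n
      linear_combination -this
    exact tendsto_nhds_unique ((hg.tendsto z₀).comp hlim) hg0
  · intro h1
    set r : ℝ := (‖z₀‖ + 1) / 2 with hr
    have hr1 : r < 1 := by rw [hr]; linarith
    have hrz : ‖z₀‖ < r := by rw [hr]; linarith
    have hr0 : 0 ≤ r := by positivity
    have hev : ∀ᶠ n in atTop, ‖z n‖ < r :=
      habs.eventually (eventually_lt_nhds hrz)
    have hpow : Tendsto (fun n => (z n) ^ n) atTop (nhds 0) := by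
      apply squeeze_zero_norm' (a := fun n => r ^ n)
      · filter_upwards [hev] with n hn
        rw [norm_pow]
        exact pow_le_pow_left₀ (norm_nonneg _) hn.le n
      · exact tendsto_pow_atTop_nhds_zero_of_norm_lt_one (by
          rwa [Real.norm_eq_abs, abs_of_nonneg hr0])
    have hh0 : Tendsto (fun n => h (z n)) atTop (nhds 0) := by
      have key : Tendsto (fun n => -((z n) ^ n * g (z n))) atTop (nhds 0) := by
        have := (hpow.mul ((hg.tendsto z₀).comp hlim)).neg
        simpa using this
      apply key.congr
      intro n
      have := hroot n
      linear_combination -this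
    exact tendsto_nhds_unique ((hh.tendsto z₀).comp hlim) hh0
end

section
/- Let T be a tree with a splitting edge e = (v₁, v₂), so that removing e yields subtrees R (containing v₁) and S (containing v₂). Then cox_T(t) = cox_R(t)·cox_S(t) − t·cox_{R̃}(t)·cox_{S̃}(t), where R̃ and S̃ are the forests obtained from R and S by deleting the vertices v₁ and v₂ respectively. -/
open Matrix Polynomial

/-- The Coxeter polynomial of a graph given by its adjacency matrix `A`
(indexed by a linearly ordered finite vertex set), defined as the
characteristic polynomial of the Coxeter matrix `-Ǧ·Ǧ⁻ᵀ`, where `Ǧ` is the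
upper triangular Gram matrix of the graph. -/
noncomputable def coxPoly {V : Type} [Fintype V] [LinearOrder V]
    (A : Matrix V V ℤ) : Polynomial ℤ :=
  let G : Matrix V V ℤ := Matrix.of fun i j => if i = j then 1 else if i < j then -A i j else 0
  (-(G * Gᵀ⁻¹)).charpoly
/-- The Coxeter polynomial of the subgraph of `G` induced on a finset `s`
of vertices. -/
noncomputable def coxOf {V : Type} [Fintype V] [LinearOrder V]
    (G : SimpleGraph V) [DecidableRel G.Adj] (s : Finset V) : Polynomial ℤ :=
  coxPoly (Matrix.of fun i j : {x // x ∈ s} => if G.Adj i.1 j.1 then (1 : ℤ) else 0)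

section Aux
open Finset

lemma det_pinned {m : Type} [Fintype m] [DecidableEq m] {K : Type} [CommRing K]
    (M : Matrix m m K) (i : m) (hc : ∀ x, x ≠ i → M x i = 0) (hd : M i i = 1) :
    M.det = (M.submatrix (fun x : {x // x ≠ i} => x.1) (fun x : {x // x ≠ i} => x.1)).det := by
  have hbij : Function.Bijective (Sum.elim (fun _ : Unit => i) (fun x : {x // x ≠ i} => x.1)) := by
    constructor
    · rintro (⟨⟩ | x) (⟨⟩ | y) h
      · rfl
      · exact absurd h.symm y.2
      · exact absurd h x.2
      · exact congrArg Sum.inr (Subtype.ext h)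
    · intro x
      by_cases hx : x = i
      · exact ⟨Sum.inl (), hx.symm⟩
      · exact ⟨Sum.inr ⟨x, hx⟩, rfl⟩
  let e := Equiv.ofBijective _ hbij
  rw [← Matrix.det_submatrix_equiv_self e M]
  have : M.submatrix e e =
      Matrix.fromBlocks (Matrix.of fun _ _ => 1) (Matrix.of fun _ y => M i y.1) 0
        (M.submatrix (fun x : {x // x ≠ i} => x.1) (fun x : {x // x ≠ i} => x.1)) := by
    ext (⟨⟩ | x) (⟨⟩ | y) <;>
      simp only [Matrix.submatrix_apply, Matrix.fromBlocks_apply₁₁, Matrix.fromBlocks_apply₁₂,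
        Matrix.fromBlocks_apply₂₁, Matrix.fromBlocks_apply₂₂, Matrix.of_apply,
        Matrix.zero_apply, e, Equiv.ofBijective_apply, Sum.elim_inl, Sum.elim_inr]
    · exact hd
    · exact hc _ x.2
  rw [this, Matrix.det_fromBlocks_zero₂₁, Matrix.det_unique, Matrix.of_apply, one_mul]

lemma det_eq_zero_of_zero_block {p : Type} [Fintype p] [DecidableEq p]
    {K : Type} [CommRing K]
    (M : Matrix p p K) (s t : Finset p)
    (hcard : Fintype.card p < s.card + t.card)
    (h : ∀ x ∈ s, ∀ y ∈ t, M x y = 0) : M.det = 0 := by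
  rw [Matrix.det_apply]
  apply Finset.sum_eq_zero
  intro σ _
  have hex : ∃ y ∈ t, σ y ∈ s := by
    by_contra hc
    push_neg at hc
    have hsub : t.image σ ⊆ sᶜ := by
      intro z hz
      simp only [Finset.mem_image] at hz
      obtain ⟨y, hy, rfl⟩ := hz
      simpa using hc y hy
    have hle := Finset.card_le_card hsub
    rw [Finset.card_image_of_injective _ σ.injective, Finset.card_compl] at hle
    have hs := Finset.card_le_card (Finset.subset_univ s)
    simp only [Finset.card_univ] at hs
    omega
  obtain ⟨y, hy, hys⟩ := hex
  have hz : ∏ i, M (σ i) i = 0 := Finset.prod_eq_zero (Finset.mem_univ y) (h _ hys _ hy)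
  rw [hz, smul_zero]

section
variable {m n : Type} [Fintype m] [Fintype n] [DecidableEq m] [DecidableEq n]
variable {K : Type} [CommRing K]

lemma zb_right (A : Matrix m m K) (B : Matrix n n K) (j : n) (u : m ⊕ n → K)
    (hu : ∀ x : n, u (Sum.inr x) = 0) :
    ((Matrix.fromBlocks A 0 0 B).updateCol (Sum.inr j) u).det = 0 := by
  apply det_eq_zero_of_zero_block _ (Finset.univ.map ⟨Sum.inr, Sum.inr_injective⟩)
    ((Finset.univ.map ⟨Sum.inl, Sum.inl_injective⟩) ∪ {Sum.inr j})
  · rw [Finset.card_union_of_disjoint (by simp), Finset.card_map, Finset.card_map]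
    simp only [Fintype.card_sum, Finset.card_univ, Finset.card_singleton]
    omega
  · rintro x hx y hy
    simp only [Finset.mem_map, Finset.mem_univ, Function.Embedding.coeFn_mk, true_and,
      Finset.mem_union, Finset.mem_singleton] at hx hy
    obtain ⟨x', rfl⟩ := hx
    rcases hy with ⟨y', rfl⟩ | rfl
    · rw [Matrix.updateCol_ne (by simp)]
      simp
    · rw [Matrix.updateCol_self]
      exact hu x'

lemma zb_left (A : Matrix m m K) (B : Matrix n n K) (i : m) (u : m ⊕ n → K)
    (hu : ∀ x : m, u (Sum.inl x) = 0) :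
    ((Matrix.fromBlocks A 0 0 B).updateCol (Sum.inl i) u).det = 0 := by
  apply det_eq_zero_of_zero_block _ (Finset.univ.map ⟨Sum.inl, Sum.inl_injective⟩)
    ((Finset.univ.map ⟨Sum.inr, Sum.inr_injective⟩) ∪ {Sum.inl i})
  · rw [Finset.card_union_of_disjoint (by simp), Finset.card_map, Finset.card_map]
    simp only [Fintype.card_sum, Finset.card_univ, Finset.card_singleton]
    omega
  · rintro x hx y hy
    simp only [Finset.mem_map, Finset.mem_univ, Function.Embedding.coeFn_mk, true_and,
      Finset.mem_union, Finset.mem_singleton] at hx hy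
    obtain ⟨x', rfl⟩ := hx
    rcases hy with ⟨y', rfl⟩ | rfl
    · rw [Matrix.updateCol_ne (by simp)]
      simp
    · rw [Matrix.updateCol_self]
      exact hu x'

lemma det_fromBlocks_single (A : Matrix m m K) (B : Matrix n n K) (i : m) (j : n) (a b : K) :
    (Matrix.fromBlocks A (Matrix.single i j a) (Matrix.single j i b) B).det
      = A.det * B.det - a * b *
        (A.submatrix (fun x : {x // x ≠ i} => x.1) (fun x : {x // x ≠ i} => x.1)).det *
        (B.submatrix (fun x : {x // x ≠ j} => x.1) (fun x : {x // x ≠ j} => x.1)).det := by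
  classical
  -- step 1: peel off the (1,2) entry
  have hN : Matrix.fromBlocks A (Matrix.single i j a) (Matrix.single j i b) B
      = (Matrix.fromBlocks A 0 (Matrix.single j i b) B).updateCol (Sum.inr j)
        ((fun r => Matrix.fromBlocks A 0 (Matrix.single j i b) B r (Sum.inr j))
          + a • (Pi.single (Sum.inl i) 1 : (m ⊕ n) → K)) := by
    ext r c
    by_cases hcj : c = Sum.inr j
    · subst hcj
      rw [Matrix.updateCol_self]
      rcases r with x | x
      · simp [Matrix.single, Pi.single_apply, eq_comm]
      · simp [Pi.single_apply]
    · rw [Matrix.updateCol_ne hcj]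
      rcases r with x | x <;> rcases c with y | y <;>
        simp_all [Matrix.single, eq_comm]
  rw [hN, Matrix.det_updateCol_add, Matrix.det_updateCol_smul,
    Matrix.updateCol_eq_self]
  -- step 2: peel off the (2,1) entry from the first determinant
  have hN1 : Matrix.fromBlocks A 0 (Matrix.single j i b) B
      = (Matrix.fromBlocks A 0 0 B).updateCol (Sum.inl i)
        ((fun r => Matrix.fromBlocks A 0 0 B r (Sum.inl i))
          + b • (Pi.single (Sum.inr j) 1 : (m ⊕ n) → K)) := by
    ext r c
    by_cases hci : c = Sum.inl i
    · subst hci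
      rw [Matrix.updateCol_self]
      rcases r with x | x
      · simp [Pi.single_apply]
      · simp [Matrix.single, Pi.single_apply, eq_comm]
    · rw [Matrix.updateCol_ne hci]
      rcases r with x | x <;> rcases c with y | y <;>
        simp_all [Matrix.single, eq_comm]
  have hdetN1 : (Matrix.fromBlocks A 0 (Matrix.single j i b) B).det
      = A.det * B.det := by
    rw [hN1, Matrix.det_updateCol_add, Matrix.det_updateCol_smul,
      Matrix.updateCol_eq_self, zb_left A B i _ (by intro x; simp [Pi.single_apply]),
      mul_zero, add_zero, Matrix.det_fromBlocks_zero₂₁]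
  rw [hdetN1]
  -- step 3: the remaining determinant
  have hcomm : ∀ (M : Matrix (m ⊕ n) (m ⊕ n) K) (u v : m ⊕ n → K),
      (M.updateCol (Sum.inl i) u).updateCol (Sum.inr j) v
        = (M.updateCol (Sum.inr j) v).updateCol (Sum.inl i) u := by
    intro M u v
    ext r c
    by_cases h1 : c = Sum.inl i
    · subst h1
      rw [Matrix.updateCol_ne (by simp), Matrix.updateCol_self,
        Matrix.updateCol_self]
    · by_cases h2 : c = Sum.inr j
      · subst h2
        rw [Matrix.updateCol_self, Matrix.updateCol_ne (by simp),
          Matrix.updateCol_self]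
      · rw [Matrix.updateCol_ne h2, Matrix.updateCol_ne h1,
          Matrix.updateCol_ne h1, Matrix.updateCol_ne h2]
  have hD : ((Matrix.fromBlocks A 0 (Matrix.single j i b) B).updateCol (Sum.inr j)
      (Pi.single (Sum.inl i) 1)).det
      = -(b * ((A.submatrix (fun x : {x // x ≠ i} => x.1) (fun x : {x // x ≠ i} => x.1)).det *
          (B.submatrix (fun x : {x // x ≠ j} => x.1) (fun x : {x // x ≠ j} => x.1)).det)) := by
    rw [hN1, hcomm, Matrix.det_updateCol_add, Matrix.det_updateCol_smul]
    have hcol : (fun r => Matrix.fromBlocks A 0 0 B r (Sum.inl i))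
        = fun r => ((Matrix.fromBlocks A 0 0 B).updateCol (Sum.inr j)
            (Pi.single (Sum.inl i) 1)) r (Sum.inl i) := by
      funext r
      rw [Matrix.updateCol_ne (by simp)]
    rw [hcol, Matrix.updateCol_eq_self,
      zb_right A B j _ (by intro x; simp [Pi.single_apply]), zero_add]
    -- the doubly-updated matrix
    have hW : ((Matrix.fromBlocks A 0 0 B).updateCol (Sum.inr j)
          (Pi.single (Sum.inl i) 1)).updateCol (Sum.inl i) (Pi.single (Sum.inr j) 1)
        = (Matrix.fromBlocks (A.updateCol i (Pi.single i 1)) 0 0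
            (B.updateCol j (Pi.single j 1))).submatrix id
            (Equiv.swap (Sum.inl i) (Sum.inr j)) := by
      ext r c
      rw [Matrix.submatrix_apply, id_eq]
      by_cases h1 : c = Sum.inl i
      · subst h1
        rw [Equiv.swap_apply_left, Matrix.updateCol_self]
        rcases r with x | x
        · simp [Pi.single_apply]
        · simp [Matrix.updateCol_self, Pi.single_apply]
      · by_cases h2 : c = Sum.inr j
        · subst h2
          rw [Equiv.swap_apply_right, Matrix.updateCol_ne (by simp),
            Matrix.updateCol_self]
          rcases r with x | x
          · simp [Matrix.updateCol_self, Pi.single_apply]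
          · simp [Pi.single_apply]
        · rw [Equiv.swap_apply_of_ne_of_ne h1 h2, Matrix.updateCol_ne h1,
            Matrix.updateCol_ne h2]
          rcases r with x | x <;> rcases c with y | y <;>
            simp_all [Matrix.updateCol_ne]
    rw [hW, Matrix.det_permute', Equiv.Perm.sign_swap (by simp),
      Matrix.det_fromBlocks_zero₂₁]
    have hA : (A.updateCol i (Pi.single i 1)).det
        = (A.submatrix (fun x : {x // x ≠ i} => x.1) (fun x : {x // x ≠ i} => x.1)).det := by
      rw [det_pinned (A.updateCol i (Pi.single i 1)) i
        (by intro x hx; rw [Matrix.updateCol_self]; exact Pi.single_eq_of_ne hx 1)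
        (by rw [Matrix.updateCol_self]; exact Pi.single_eq_same i 1)]
      congr 1
      ext x y
      rw [Matrix.submatrix_apply, Matrix.submatrix_apply, Matrix.updateCol_ne y.2]
    have hB : (B.updateCol j (Pi.single j 1)).det
        = (B.submatrix (fun x : {x // x ≠ j} => x.1) (fun x : {x // x ≠ j} => x.1)).det := by
      rw [det_pinned (B.updateCol j (Pi.single j 1)) j
        (by intro x hx; rw [Matrix.updateCol_self]; exact Pi.single_eq_of_ne hx 1)
        (by rw [Matrix.updateCol_self]; exact Pi.single_eq_same j 1)]
      congr 1
      ext x y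
      rw [Matrix.submatrix_apply, Matrix.submatrix_apply, Matrix.updateCol_ne y.2]
    rw [hA, hB]
    push_cast
    ring
  rw [hD]
  ring
end

end Aux

noncomputable def gramM {V : Type} [Fintype V] [LinearOrder V] (A : Matrix V V ℤ) :
    Matrix V V ℤ :=
  Matrix.of fun i j => if i = j then 1 else if i < j then -A i j else 0

noncomputable def polyM {V : Type} [Fintype V] [LinearOrder V] (A : Matrix V V ℤ) :
    Matrix V V ℤ[X] :=
  (gramM A).map C + (X : ℤ[X]) • ((gramM A)ᵀ).map C

lemma gramM_det {V : Type} [Fintype V] [LinearOrder V] (A : Matrix V V ℤ) :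
    (gramM A).det = 1 := by
  rw [Matrix.det_of_upperTriangular (M := gramM A)
    (by intro i j hij; simp only [gramM, Matrix.of_apply, id_eq] at hij ⊢
        rw [if_neg (by exact fun h => absurd h (ne_of_gt hij)), if_neg (not_lt_of_gt hij)])]
  simp [gramM]

lemma coxPoly_eq_det {V : Type} [Fintype V] [LinearOrder V] (A : Matrix V V ℤ) :
    coxPoly A = (polyM A).det := by
  have hG : coxPoly A = (-(gramM A * (gramM A)ᵀ⁻¹)).charpoly := rfl
  rw [hG]
  set Gm := gramM A with hGm
  have hdetT : Gmᵀ.det = 1 := by rw [Matrix.det_transpose]; exact gramM_det A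
  have hu : IsUnit Gmᵀ.det := by rw [hdetT]; exact isUnit_one
  have hinv : Gmᵀ * Gmᵀ⁻¹ = 1 := Matrix.mul_nonsing_inv _ hu
  rw [Matrix.charpoly]
  have hchar : Matrix.charmatrix (-(Gm * Gmᵀ⁻¹)) = polyM A * (Gmᵀ⁻¹).map C := by
    rw [Matrix.charmatrix, map_neg, sub_neg_eq_add]
    rw [polyM, Matrix.add_mul, Matrix.smul_mul]
    have h1 : (Gmᵀ).map C * (Gmᵀ⁻¹).map C = 1 := by
      rw [← Matrix.map_mul, hinv]
      simp
    have h2 : (RingHom.mapMatrix C) (Gm * Gmᵀ⁻¹) = Gm.map C * (Gmᵀ⁻¹).map C := by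
      simp [Matrix.map_mul]
    rw [h2, h1]
    have hscal : (Matrix.scalar V) X = (X : ℤ[X]) • (1 : Matrix V V ℤ[X]) := by
      ext i j
      by_cases h : i = j
      · subst h; simp
      · simp [Matrix.one_apply_ne h, Matrix.scalar_apply, Matrix.diagonal_apply_ne _ h]
    rw [hscal]
    exact add_comm _ _
  rw [hchar, Matrix.det_mul]
  have h3 : ((Gmᵀ⁻¹).map C).det = 1 := by
    have hmd : (Gmᵀ⁻¹.map (C : ℤ →+* ℤ[X])).det = C (Gmᵀ⁻¹.det) :=
      (RingHom.map_det C _).symm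
    rw [hmd, Matrix.det_nonsing_inv, hdetT]
    simp
  rw [h3, mul_one]

lemma polyM_submatrix {V W : Type} [Fintype V] [LinearOrder V] [Fintype W] [LinearOrder W]
    (A : Matrix V V ℤ) (f : W → V) (hlt : ∀ x y, f x < f y ↔ x < y)
    (heq : ∀ x y, f x = f y ↔ x = y) :
    polyM (A.submatrix f f) = (polyM A).submatrix f f := by
  have hg : gramM (A.submatrix f f) = (gramM A).submatrix f f := by
    ext i j
    simp only [gramM, Matrix.of_apply, Matrix.submatrix_apply, hlt, heq]
  ext i j
  simp [polyM, hg, Matrix.add_apply, Matrix.smul_apply, Matrix.map_apply,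
    Matrix.transpose_apply, Matrix.submatrix_apply]

/-- **Subbotin–Sumin splitting formula.** If `e = (v₁, v₂)` is an edge of a
tree `T`, splitting it into the subtree `R` containing `v₁` and the subtree
`S` containing `v₂`, then
`cox_T = cox_R · cox_S − t · cox_R̃ · cox_S̃`, where `R̃ = R − v₁`, `S̃ = S − v₂`. -/
theorem coxPoly_splitting_edge {V : Type} [Fintype V] [LinearOrder V]
    (G : SimpleGraph V) [DecidableRel G.Adj] (hT : G.IsTree)
    (v₁ v₂ : V) (he : G.Adj v₁ v₂) (R S : Finset V)
    (hR : ∀ w, w ∈ R ↔ (G.deleteEdges {s(v₁, v₂)}).Reachable v₁ w)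
    (hS : ∀ w, w ∈ S ↔ (G.deleteEdges {s(v₁, v₂)}).Reachable v₂ w) :
    coxOf G Finset.univ =
      coxOf G R * coxOf G S - X * (coxOf G (R.erase v₁) * coxOf G (S.erase v₂)) := by
  classical
  -- graph-theoretic facts
  have hbr : ¬ (G.deleteEdges {s(v₁, v₂)}).Reachable v₁ v₂ := by
    have hb := (SimpleGraph.isAcyclic_iff_forall_adj_isBridge.mp hT.IsAcyclic) he
    rw [SimpleGraph.isBridge_iff] at hb
    exact hb
  have hv₁ : v₁ ∈ R := (hR v₁).mpr (SimpleGraph.Reachable.refl v₁)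
  have hv₂ : v₂ ∈ S := (hS v₂).mpr (SimpleGraph.Reachable.refl v₂)
  have hdisj : ∀ w, w ∈ R → w ∈ S → False := fun w h1 h2 =>
    hbr (((hR w).mp h1).trans ((hS w).mp h2).symm)
  have hstep : ∀ u x, G.Adj u x → (u ∈ R ∨ u ∈ S) → (x ∈ R ∨ x ∈ S) := by
    intro u x hadj hu
    by_cases hedge : s(u, x) = s(v₁, v₂)
    · rcases Sym2.eq_iff.mp hedge with ⟨h1, h2⟩ | ⟨h1, h2⟩
      · subst h2; exact Or.inr hv₂
      · subst h2; exact Or.inl hv₁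
    · have hadj' : (G.deleteEdges {s(v₁, v₂)}).Adj u x := by
        rw [SimpleGraph.deleteEdges_adj]
        exact ⟨hadj, by simpa using hedge⟩
      rcases hu with h | h
      · exact Or.inl ((hR x).mpr (((hR u).mp h).trans hadj'.reachable))
      · exact Or.inr ((hS x).mpr (((hS u).mp h).trans hadj'.reachable))
  have hcover : ∀ w, w ∈ R ∨ w ∈ S := by
    have key : ∀ (u w : V) (p : G.Walk u w), (u ∈ R ∨ u ∈ S) → (w ∈ R ∨ w ∈ S) := by
      intro u w p
      induction p with
      | nil => exact id
      | cons h p ih => exact fun hu => ih (hstep _ _ h hu)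
    intro w
    obtain ⟨p⟩ := hT.isConnected.preconnected v₁ w
    exact key _ _ p (Or.inl hv₁)
  have hcross : ∀ r s, r ∈ R → s ∈ S → G.Adj r s → r = v₁ ∧ s = v₂ := by
    intro r s hr hs hadj
    by_cases hedge : s(r, s) = s(v₁, v₂)
    · rcases Sym2.eq_iff.mp hedge with ⟨h1, h2⟩ | ⟨h1, h2⟩
      · exact ⟨h1, h2⟩
      · exfalso; subst h1; exact hdisj r hr hv₂
    · exfalso
      have hadj' : (G.deleteEdges {s(v₁, v₂)}).Adj r s := by
        rw [SimpleGraph.deleteEdges_adj]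
        exact ⟨hadj, by simpa using hedge⟩
      exact hbr ((((hR r).mp hr).trans hadj'.reachable).trans (((hS s).mp hs)).symm)
  -- matrices
  set adjM : Matrix V V ℤ := Matrix.of fun i j => if G.Adj i j then 1 else 0 with hadjM
  have hcox : ∀ s : Finset V, coxOf G s =
      ((polyM adjM).submatrix (fun x : {x // x ∈ s} => x.1) (fun x : {x // x ∈ s} => x.1)).det := by
    intro s
    have h0 : coxOf G s = (polyM
        (adjM.submatrix (fun x : {x // x ∈ s} => x.1) (fun x : {x // x ∈ s} => x.1))).det :=
      coxPoly_eq_det _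
    rw [h0, polyM_submatrix adjM _ (fun x y => Subtype.coe_lt_coe) (fun x y => Subtype.coe_inj)]
  set P : Matrix V V ℤ[X] := polyM adjM with hP
  have hzero : ∀ x y : V, x ≠ y → ¬ G.Adj x y → P x y = 0 := by
    intro x y hxy hnadj
    have hyx : ¬ G.Adj y x := fun h => hnadj h.symm
    simp [hP, polyM, gramM, Matrix.add_apply, Matrix.smul_apply, Matrix.map_apply,
      Matrix.transpose_apply, hadjM, hxy, Ne.symm hxy, hnadj, hyx]
  have hPP : P v₁ v₂ * P v₂ v₁ = X := by
    have h12 : G.Adj v₂ v₁ := he.symm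
    have hne : v₁ ≠ v₂ := he.ne
    rcases lt_trichotomy v₁ v₂ with h | h | h
    · have h' : ¬ v₂ < v₁ := not_lt_of_gt h
      simp [hP, polyM, gramM, Matrix.add_apply, Matrix.smul_apply, Matrix.map_apply,
        Matrix.transpose_apply, hadjM, hne, Ne.symm hne, h, h', he, h12]
    · exact absurd h hne
    · have h' : ¬ v₁ < v₂ := not_lt_of_gt h
      simp [hP, polyM, gramM, Matrix.add_apply, Matrix.smul_apply, Matrix.map_apply,
        Matrix.transpose_apply, hadjM, hne, Ne.symm hne, h, h', he, h12]
  -- the sum equivalence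
  have hbij : Function.Bijective
      (Sum.elim (fun x : {x // x ∈ R} => x.1) (fun x : {x // x ∈ S} => x.1)) := by
    constructor
    · rintro (x | x) (y | y) h
      · exact congrArg Sum.inl (Subtype.ext h)
      · exact absurd ((show (x.1 : V) = y.1 from h) ▸ y.2) (fun hh => hdisj x.1 x.2 hh)
      · exact absurd ((show (x.1 : V) = y.1 from h) ▸ y.2) (fun hh => hdisj x.1 hh x.2)
      · exact congrArg Sum.inr (Subtype.ext h)
    · intro x
      rcases hcover x with h | h
      · exact ⟨Sum.inl ⟨x, h⟩, rfl⟩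
      · exact ⟨Sum.inr ⟨x, h⟩, rfl⟩
  set e := Equiv.ofBijective _ hbij with hee
  have hblocks : P.submatrix e e
      = Matrix.fromBlocks
          (P.submatrix (fun x : {x // x ∈ R} => x.1) (fun x : {x // x ∈ R} => x.1))
          (Matrix.single (⟨v₁, hv₁⟩ : {x // x ∈ R}) (⟨v₂, hv₂⟩ : {x // x ∈ S})
            (P v₁ v₂))
          (Matrix.single (⟨v₂, hv₂⟩ : {x // x ∈ S}) (⟨v₁, hv₁⟩ : {x // x ∈ R})
            (P v₂ v₁))
          (P.submatrix (fun x : {x // x ∈ S} => x.1) (fun x : {x // x ∈ S} => x.1)) := by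
    apply Matrix.ext
    rintro (x | x) (y | y)
    · rfl
    · show P x.1 y.1
        = (if (⟨v₁, hv₁⟩ : {x // x ∈ R}) = x ∧ (⟨v₂, hv₂⟩ : {x // x ∈ S}) = y
            then P v₁ v₂ else 0)
      by_cases hx : (⟨v₁, hv₁⟩ : {x // x ∈ R}) = x
      · by_cases hy : (⟨v₂, hv₂⟩ : {x // x ∈ S}) = y
        · rw [if_pos ⟨hx, hy⟩, ← hx, ← hy]
        · rw [if_neg (fun hc => hy hc.2)]
          refine hzero _ _ (fun hh => hdisj x.1 x.2 (hh ▸ y.2)) (fun hadj => ?_)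
          obtain ⟨h1, h2⟩ := hcross x.1 y.1 x.2 y.2 hadj
          exact hy (Subtype.ext h2.symm)
      · rw [if_neg (fun hc => hx hc.1)]
        refine hzero _ _ (fun hh => hdisj x.1 x.2 (hh ▸ y.2)) (fun hadj => ?_)
        obtain ⟨h1, h2⟩ := hcross x.1 y.1 x.2 y.2 hadj
        exact hx (Subtype.ext h1.symm)
    · show P x.1 y.1
        = (if (⟨v₂, hv₂⟩ : {x // x ∈ S}) = x ∧ (⟨v₁, hv₁⟩ : {x // x ∈ R}) = y
            then P v₂ v₁ else 0)
      by_cases hx : (⟨v₂, hv₂⟩ : {x // x ∈ S}) = x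
      · by_cases hy : (⟨v₁, hv₁⟩ : {x // x ∈ R}) = y
        · rw [if_pos ⟨hx, hy⟩, ← hx, ← hy]
        · rw [if_neg (fun hc => hy hc.2)]
          refine hzero _ _ (fun hh => hdisj y.1 y.2 (hh.symm ▸ x.2)) (fun hadj => ?_)
          obtain ⟨h1, h2⟩ := hcross y.1 x.1 y.2 x.2 hadj.symm
          exact hy (Subtype.ext h1.symm)
      · rw [if_neg (fun hc => hx hc.1)]
        refine hzero _ _ (fun hh => hdisj y.1 y.2 (hh.symm ▸ x.2)) (fun hadj => ?_)
        obtain ⟨h1, h2⟩ := hcross y.1 x.1 y.2 x.2 hadj.symm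
        exact hx (Subtype.ext h2.symm)
    · rfl
  have huniv : coxOf G Finset.univ = P.det := by
    rw [hcox Finset.univ]
    exact Matrix.det_submatrix_equiv_self
      (Equiv.subtypeUnivEquiv (fun x : V => Finset.mem_univ x)) P
  have hminR : ((P.submatrix (fun x : {x // x ∈ R} => x.1) (fun x : {x // x ∈ R} => x.1)).submatrix
        (fun x : {x // x ≠ (⟨v₁, hv₁⟩ : {x // x ∈ R})} => x.1)
        (fun x : {x // x ≠ (⟨v₁, hv₁⟩ : {x // x ∈ R})} => x.1)).det
      = coxOf G (R.erase v₁) := by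
    rw [hcox (R.erase v₁)]
    let ee : {x : {y // y ∈ R} // x ≠ (⟨v₁, hv₁⟩ : {x // x ∈ R})} ≃ {x // x ∈ R.erase v₁} :=
      { toFun := fun x => ⟨x.1.1, Finset.mem_erase.mpr ⟨fun h => x.2 (Subtype.ext h), x.1.2⟩⟩
        invFun := fun x => ⟨⟨x.1, (Finset.mem_erase.mp x.2).2⟩,
          fun h => (Finset.mem_erase.mp x.2).1 (congrArg Subtype.val h)⟩
        left_inv := fun x => rfl
        right_inv := fun x => rfl }
    have hmat : ((P.submatrix (fun x : {x // x ∈ R} => x.1) (fun x : {x // x ∈ R} => x.1)).submatrix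
          (fun x : {x // x ≠ (⟨v₁, hv₁⟩ : {x // x ∈ R})} => x.1)
          (fun x : {x // x ≠ (⟨v₁, hv₁⟩ : {x // x ∈ R})} => x.1))
        = (P.submatrix (fun x : {x // x ∈ R.erase v₁} => x.1)
            (fun x : {x // x ∈ R.erase v₁} => x.1)).submatrix ee ee :=
      Matrix.ext fun x y => rfl
    rw [hmat]
    exact Matrix.det_submatrix_equiv_self ee
      (P.submatrix (fun x : {x // x ∈ R.erase v₁} => x.1) (fun x : {x // x ∈ R.erase v₁} => x.1))
  have hminS : ((P.submatrix (fun x : {x // x ∈ S} => x.1) (fun x : {x // x ∈ S} => x.1)).submatrix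
        (fun x : {x // x ≠ (⟨v₂, hv₂⟩ : {x // x ∈ S})} => x.1)
        (fun x : {x // x ≠ (⟨v₂, hv₂⟩ : {x // x ∈ S})} => x.1)).det
      = coxOf G (S.erase v₂) := by
    rw [hcox (S.erase v₂)]
    let ee : {x : {y // y ∈ S} // x ≠ (⟨v₂, hv₂⟩ : {x // x ∈ S})} ≃ {x // x ∈ S.erase v₂} :=
      { toFun := fun x => ⟨x.1.1, Finset.mem_erase.mpr ⟨fun h => x.2 (Subtype.ext h), x.1.2⟩⟩
        invFun := fun x => ⟨⟨x.1, (Finset.mem_erase.mp x.2).2⟩,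
          fun h => (Finset.mem_erase.mp x.2).1 (congrArg Subtype.val h)⟩
        left_inv := fun x => rfl
        right_inv := fun x => rfl }
    have hmat : ((P.submatrix (fun x : {x // x ∈ S} => x.1) (fun x : {x // x ∈ S} => x.1)).submatrix
          (fun x : {x // x ≠ (⟨v₂, hv₂⟩ : {x // x ∈ S})} => x.1)
          (fun x : {x // x ≠ (⟨v₂, hv₂⟩ : {x // x ∈ S})} => x.1))
        = (P.submatrix (fun x : {x // x ∈ S.erase v₂} => x.1)
            (fun x : {x // x ∈ S.erase v₂} => x.1)).submatrix ee ee :=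
      Matrix.ext fun x y => rfl
    rw [hmat]
    exact Matrix.det_submatrix_equiv_self ee
      (P.submatrix (fun x : {x // x ∈ S.erase v₂} => x.1) (fun x : {x // x ∈ S.erase v₂} => x.1))
  rw [huniv, ← Matrix.det_submatrix_equiv_self e P, hblocks, det_fromBlocks_single,
    hminR, hminS, hPP, hcox R, hcox S]
  ring
end

section
/- For each p ≥ 2, the polynomial t^p − 2t^{p-1} − 1 has a unique real root ρ_p in (2, 3), this root is the largest root in absolute value, and ρ_p → 2 as p → ∞. -/
open Filter

lemma aux_mono (p : ℕ) : StrictMonoOn (fun x : ℝ => x ^ p * (x - 2)) (Set.Ici 2) := by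
  intro a ha b hb hab
  simp only [Set.mem_Ici] at ha hb
  have h1 : a ^ p * (a - 2) ≤ b ^ p * (a - 2) :=
    mul_le_mul_of_nonneg_right (pow_le_pow_left₀ (by linarith) hab.le p) (by linarith)
  have h2 : b ^ p * (a - 2) < b ^ p * (b - 2) := by
    have hb0 : (0:ℝ) < b ^ p := pow_pos (by linarith) p
    nlinarith
  simpa using lt_of_le_of_lt h1 h2

lemma aux_ex (p : ℕ) (hp : 2 ≤ p) :
    ∃ x ∈ Set.Ioo (2:ℝ) 3, x ^ (p-1) * (x - 2) = 1 := by
  have hc : ContinuousOn (fun x : ℝ => x ^ (p-1) * (x - 2)) (Set.Icc 2 3) :=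
    ((continuous_pow _).mul (continuous_id.sub continuous_const)).continuousOn
  have h1 : (1:ℝ) ∈ Set.Ioo ((fun x : ℝ => x ^ (p-1) * (x - 2)) 2)
      ((fun x : ℝ => x ^ (p-1) * (x - 2)) 3) := by
    have h3 : (1:ℝ) < 3 ^ (p-1) := one_lt_pow₀ (by norm_num) (by omega)
    constructor <;> simp <;> nlinarith
  obtain ⟨x, hx, hfx⟩ := intermediate_value_Ioo (by norm_num : (2:ℝ) ≤ 3) hc h1
  exact ⟨x, hx, hfx⟩

lemma aux_eq_iff (p : ℕ) (hp : 2 ≤ p) (x : ℝ) :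
    x ^ p - 2 * x ^ (p-1) - 1 = 0 ↔ x ^ (p-1) * (x - 2) = 1 := by
  have h : x ^ p = x ^ (p-1) * x := by
    conv_lhs => rw [show p = (p-1) + 1 by omega]
    rw [pow_succ]
  constructor <;> intro hx
  · linear_combination hx - h
  · linear_combination hx + h

/-- For each `p ≥ 2` the polynomial `t^p − 2t^{p-1} − 1` has a unique real root
`ρ_p` in `(2, 3)`; this root is the largest root in absolute value, and
`ρ_p → 2` as `p → ∞`. -/
theorem root_pow_sub_two_pow_sub_one :
    ∃ ρ : ℕ → ℝ,
      (∀ p : ℕ, 2 ≤ p →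
        ρ p ∈ Set.Ioo (2 : ℝ) 3 ∧
        (ρ p) ^ p - 2 * (ρ p) ^ (p - 1) - 1 = 0 ∧
        (∀ x ∈ Set.Ioo (2 : ℝ) 3, x ^ p - 2 * x ^ (p - 1) - 1 = 0 → x = ρ p) ∧
        (∀ z : ℂ, z ^ p - 2 * z ^ (p - 1) - 1 = 0 → ‖z‖ ≤ ρ p)) ∧
      Tendsto ρ atTop (nhds 2) := by
  classical
  refine ⟨fun p => if h : 2 ≤ p then (aux_ex p h).choose else 2, ?_, ?_⟩
  · intro p hp
    simp only [dif_pos hp]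
    obtain ⟨hmem, heq⟩ := (aux_ex p hp).choose_spec
    set r := (aux_ex p hp).choose with hr
    refine ⟨hmem, (aux_eq_iff p hp r).mpr heq, ?_, ?_⟩
    · intro x hx hx0
      have hx1 := (aux_eq_iff p hp x).mp hx0
      exact (aux_mono (p-1)).injOn (Set.mem_Ici.mpr hx.1.le)
        (Set.mem_Ici.mpr hmem.1.le) (by simpa [heq] using hx1)
    · intro z hz
      by_contra hlt
      push_neg at hlt
      have hz2 : (2:ℝ) < ‖z‖ := lt_trans hmem.1 hlt
      have hzp : z ^ p = 2 * z ^ (p-1) + 1 := by linear_combination hz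
      have habs : ‖z‖ ^ p ≤ 2 * ‖z‖ ^ (p-1) + 1 := by
        calc ‖z‖ ^ p = ‖z ^ p‖ := (norm_pow _ _).symm
          _ = ‖2 * z ^ (p-1) + 1‖ := by rw [hzp]
          _ ≤ ‖2 * z ^ (p-1)‖ + ‖(1:ℂ)‖ := norm_add_le _ _
          _ = 2 * ‖z‖ ^ (p-1) + 1 := by
              simp [map_mul, map_pow]
      have hpow : ‖z‖ ^ p = ‖z‖ ^ (p-1) * ‖z‖ := by
        conv_lhs => rw [show p = (p-1) + 1 by omega]
        rw [pow_succ]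
      have hle1 : ‖z‖ ^ (p-1) * (‖z‖ - 2) ≤ 1 := by
        nlinarith [habs, hpow]
      have := aux_mono (p-1) (Set.mem_Ici.mpr hmem.1.le)
        (Set.mem_Ici.mpr hz2.le) hlt
      simp only [heq] at this
      linarith
  · have hub : ∀ p : ℕ, 2 ≤ p →
        (if h : 2 ≤ p then (aux_ex p h).choose else 2) ≤ 2 + (1/2:ℝ) ^ (p-1) := by
      intro p hp
      simp only [dif_pos hp]
      obtain ⟨hmem, heq⟩ := (aux_ex p hp).choose_spec
      set r := (aux_ex p hp).choose
      have h1 : (2:ℝ) ^ (p-1) ≤ r ^ (p-1) := pow_le_pow_left₀ (by norm_num) hmem.1.le _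
      have h2 : (2:ℝ) ^ (p-1) * (r - 2) ≤ 1 := by nlinarith [hmem.1]
      have e : (1/2:ℝ) ^ (p-1) * 2 ^ (p-1) = 1 := by
        rw [← mul_pow]; norm_num
      have hp2 : (0:ℝ) < (1/2:ℝ) ^ (p-1) := pow_pos (by norm_num) _
      nlinarith [h2, e, hp2, pow_pos (show (0:ℝ) < 2 by norm_num) (p-1)]
    have hlb : ∀ p : ℕ, 2 ≤ p →
        (2:ℝ) ≤ (if h : 2 ≤ p then (aux_ex p h).choose else 2) := by
      intro p hp
      simp only [dif_pos hp]
      exact (aux_ex p hp).choose_spec.1.1.le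
    have htop : Tendsto (fun p : ℕ => 2 + (1/2:ℝ) ^ (p-1)) atTop (nhds 2) := by
      have : Tendsto (fun p : ℕ => (1/2:ℝ) ^ (p-1)) atTop (nhds 0) :=
        (tendsto_pow_atTop_nhds_zero_of_lt_one (by norm_num) (by norm_num)).comp
          (tendsto_sub_atTop_nat 1)
      simpa using tendsto_const_nhds.add this
    refine tendsto_of_tendsto_of_tendsto_of_le_of_le' tendsto_const_nhds htop ?_ ?_
    · exact eventually_atTop.mpr ⟨2, fun p hp => hlb p hp⟩
    · exact eventually_atTop.mpr ⟨2, fun p hp => hub p hp⟩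
end

section
/- Let T be the join of trees T⁽¹⁾,…,T⁽ᵏ⁾ at vertices v_1,…,v_k. Then cox_T(t) = (t+1)·∏_{i=1}^k cox_{T⁽ⁱ⁾}(t) − t·∑_{i=1}^k P_i(t), where P_i(t) = cox_{T̃⁽ⁱ⁾}(t)·∏_{j≠i} cox_{T⁽ʲ⁾}(t) and T̃⁽ⁱ⁾ is the forest obtained from T⁽ⁱ⁾ by deleting the vertex v_i. -/
open Matrix Polynomial

noncomputable def coxMat {V : Type} [LinearOrder V] (G : SimpleGraph V) [DecidableRel G.Adj] :
    Matrix V V (Polynomial ℤ) :=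
  fun a b => if a = b then X + 1 else if G.Adj a b then (if a < b then -1 else -X) else 0

lemma coxOf_eq_det {V : Type} [Fintype V] [LinearOrder V]
    (G : SimpleGraph V) [DecidableRel G.Adj] (s : Finset V) :
    coxOf G s = ((coxMat G).submatrix (Subtype.val : {x // x ∈ s} → V) Subtype.val).det := by
  classical
  set n := {x // x ∈ s}
  set A : Matrix n n ℤ := Matrix.of fun i j : n => if G.Adj i.1 j.1 then (1 : ℤ) else 0 with hA
  set GG : Matrix n n ℤ := Matrix.of fun i j => if i = j then 1 else if i < j then -A i j else 0
    with hGG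
  have hdet : GG.det = 1 := by
    rw [Matrix.det_of_upperTriangular]
    · simp [hGG]
    · intro i j hij
      simp only [id] at hij
      simp [hGG, Matrix.of_apply, hij.ne', hij.asymm]
  have hdetT : GGᵀ.det = 1 := by rw [Matrix.det_transpose, hdet]
  have hmul : GGᵀ⁻¹ * GGᵀ = 1 := Matrix.nonsing_inv_mul _ (by rw [hdetT]; exact isUnit_one)
  set φ : ℤ →+* Polynomial ℤ := (Polynomial.C : ℤ →+* Polynomial ℤ) with hφ
  have key : charmatrix (-(GG * GGᵀ⁻¹)) * (GGᵀ.map φ) = (X : Polynomial ℤ) • GGᵀ.map φ + GG.map φ := by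
    have hneg : (-(GG * GGᵀ⁻¹)).map (⇑φ) = -((GG * GGᵀ⁻¹).map φ) := by
      refine Matrix.ext fun i j => ?_; simp [Matrix.map_apply, Matrix.mul_apply, map_sum, _root_.map_mul]
    rw [charmatrix, sub_mul, RingHom.mapMatrix_apply, hneg, Matrix.neg_mul, sub_neg_eq_add]
    congr 1
    · ext i j : 1
      simp [Matrix.mul_apply, Matrix.scalar_apply, Matrix.diagonal_apply, ite_mul,
        Finset.sum_ite_eq, Matrix.smul_apply]
      rw [Finset.sum_ite_eq]; simp
    · rw [Matrix.map_mul, Matrix.mul_assoc, ← Matrix.map_mul, hmul]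
      simp
  have hcox : coxOf G s = ((X : Polynomial ℤ) • GGᵀ.map φ + GG.map φ).det := by
    have := congrArg Matrix.det key
    rw [Matrix.det_mul] at this
    have hd : (GGᵀ.map φ).det = 1 := by
      have : GGᵀ.map φ = φ.mapMatrix GGᵀ := rfl
      rw [this, ← RingHom.map_det, hdetT]; simp
    rw [hd, mul_one] at this
    rw [coxOf, coxPoly, ← hA]
    exact this
  rw [hcox]
  congr 1
  refine Matrix.ext fun i j => ?_
  have hval : (i = j) ↔ (i.1 = j.1) := Subtype.ext_iff
  rcases lt_trichotomy i j with h | h | h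
  · have hv : i.1 < j.1 := h
    simp [hGG, hA, coxMat, Matrix.smul_apply, Matrix.map_apply, h.ne, h.ne', h, h.asymm,
      hv.ne, hv, hφ, apply_ite φ, _root_.map_neg, _root_.map_one, _root_.map_zero]
    split <;> simp
  · subst h
    simp [hGG, coxMat, hφ, Matrix.smul_apply, Matrix.map_apply]
    try ring
  · have hv : j.1 < i.1 := h
    have hadj : G.Adj i.1 j.1 ↔ G.Adj j.1 i.1 := G.adj_comm _ _
    simp [hGG, hA, coxMat, Matrix.smul_apply, Matrix.map_apply, h.ne, h.ne', h.asymm, h,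
      hv.ne', not_lt.2 hv.le, hφ, apply_ite φ, _root_.map_neg, _root_.map_one, _root_.map_zero, hadj]
    split <;> simp <;> try ring

section DetLemmas
open Finset

variable {n : Type*} [DecidableEq n] [Fintype n] {R : Type*} [CommRing R]

lemma det_eq_det_minor_of_row_single (A : Matrix n n R) (e : n)
    (h : ∀ b, A e b = if b = e then 1 else 0) :
    A.det = (A.submatrix (fun a : {a : n // a ≠ e} => a.1) (fun a : {a : n // a ≠ e} => a.1)).det := by
  rw [Matrix.twoBlockTriangular_det' A (fun a => a = e)
    (fun i hi j hj => by rw [hi, h]; exact if_neg hj)]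
  haveI : Subsingleton {a : n // a = e} := ⟨fun x y => Subtype.ext (x.2.trans y.2.symm)⟩
  have hone : ∀ (inst1 : DecidableEq {a : n // a = e}) (inst2 : Fintype {a : n // a = e}),
      @Matrix.det _ inst1 inst2 _ _ (Matrix.toSquareBlockProp A fun a => a = e) = 1 := by
    intro inst1 inst2
    rw [Matrix.det_eq_elem_of_subsingleton _ ⟨e, rfl⟩]
    simp [Matrix.toSquareBlockProp, h]
  rw [hone, one_mul]
  rfl

lemma adjugate_diag_eq (A : Matrix n n R) (e : n) :
    A.adjugate e e =
      (A.submatrix (fun a : {a : n // a ≠ e} => a.1) (fun a : {a : n // a ≠ e} => a.1)).det := by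
  rw [Matrix.adjugate_apply]
  rw [det_eq_det_minor_of_row_single _ e (fun b => by
    rw [Matrix.updateRow_self]; exact Pi.single_apply e 1 b)]
  congr 1
  refine Matrix.ext fun a b => ?_
  simp [Matrix.updateRow_ne a.2]

/-- Abstract determinant expansion for a "join at a vertex" block structure. -/
lemma det_join {F : Type*} [Field F] {V : Type} [Fintype V] [DecidableEq V]
    (M : Matrix V V F) (t : F) (v : V) (k : ℕ) (w : Fin k → V) (hw : Function.Injective w)
    (C : Fin k → Finset V)
    (hwv : ∀ i, w i ≠ v)
    (hwC : ∀ i, w i ∈ C i)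
    (hvC : ∀ i, v ∉ C i)
    (hcover : ∀ a, a ≠ v → ∃ i, a ∈ C i)
    (hdisj : ∀ i j a, a ∈ C i → a ∈ C j → i = j)
    (hcross : ∀ i j a a', i ≠ j → a ∈ C i → a' ∈ C j → M a a' = 0)
    (hrow : ∀ a, a ≠ v → (∀ i, a ≠ w i) → M v a = 0)
    (hcol : ∀ a, a ≠ v → (∀ i, a ≠ w i) → M a v = 0)
    (hprod : ∀ i, M v (w i) * M (w i) v = t)
    (hPne : ∀ i, (M.submatrix (fun x : {x // x ∈ C i} => x.1) (fun x => x.1)).det ≠ 0) :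
    M.det = M v v * (∏ i, (M.submatrix (fun x : {x // x ∈ C i} => x.1) (fun x => x.1)).det)
      - t * ∑ i, ((M.submatrix (fun x : {x // x ∈ (C i).erase (w i)} => x.1) (fun x => x.1)).det *
          ∏ j ∈ Finset.univ.erase i, (M.submatrix (fun x : {x // x ∈ C j} => x.1) (fun x => x.1)).det) := by
  have hexu : ∀ a : {a : V // ¬ a = v}, ∃! i, a.1 ∈ C i := fun a =>
    (hcover a.1 a.2).elim fun i hi => ⟨i, hi, fun j hj => hdisj j i _ hj hi⟩
  set S := {a : V // ¬ a = v} with hS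
  let b : S → Fin k := fun a => Fintype.choose _ (hexu a)
  have hb : ∀ a : S, a.1 ∈ C (b a) := fun a => Fintype.choose_spec _ (hexu a)
  have hbu : ∀ (a : S) i, a.1 ∈ C i → b a = i := fun a i hi => hdisj _ _ _ (hb a) hi
  let wS : Fin k → S := fun i => ⟨w i, hwv i⟩
  have hwb : ∀ i, b (wS i) = i := fun i => hbu _ _ (hwC i)
  -- the minor at v
  set D := M.toBlock (fun a => ¬ a = v) (fun a => ¬ a = v) with hD
  have hD0 : ∀ x y : S, b x ≠ b y → D x y = 0 := fun x y h =>
    hcross _ _ _ _ h (hb x) (hb y)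
  have hBT : D.BlockTriangular b := fun x y h => hD0 x y (ne_of_gt h)
  have hBT2 : D.BlockTriangular (fun x => OrderDual.toDual (b x)) := fun x y h =>
    hD0 x y (ne_of_lt h)
  -- block equivalences
  let eB : ∀ i : Fin k, {x : S // b x = i} ≃ {x // x ∈ C i} := fun i =>
    { toFun := fun a => ⟨a.1.1, by have := hb a.1; rwa [a.2] at this⟩
      invFun := fun x => ⟨⟨x.1, fun h => hvC i (h ▸ x.2)⟩, hbu _ i x.2⟩
      left_inv := fun a => Subtype.ext (Subtype.ext rfl)
      right_inv := fun x => rfl }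
  let N : (i : Fin k) → Matrix {x // x ∈ C i} {x // x ∈ C i} F := fun i =>
    M.submatrix (fun x : {x // x ∈ C i} => x.1) (fun x : {x // x ∈ C i} => x.1)
  have hblock : ∀ i, D.toSquareBlock b i = (N i).submatrix (eB i) (eB i) := fun i => rfl
  have hdetblock : ∀ i, (D.toSquareBlock b i).det = (N i).det := fun i => by
    rw [hblock i, Matrix.det_submatrix_equiv_self]
  have hdetD : D.det = ∏ i, (N i).det := by
    rw [hBT.det_fintype]
    exact Finset.prod_congr rfl fun i _ => hdetblock i
  have hdetDne : D.det ≠ 0 := by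
    rw [hdetD]; exact Finset.prod_ne_zero_iff.2 fun i _ => hPne i
  haveI hDinvert : Invertible D := D.invertibleOfIsUnitDet (isUnit_iff_ne_zero.2 hdetDne)
  have hDinv0 : ∀ x y : S, b x ≠ b y → D⁻¹ x y = 0 := by
    have h1 := Matrix.blockTriangular_inv_of_blockTriangular hBT
    have h2 := Matrix.blockTriangular_inv_of_blockTriangular hBT2
    intro x y h
    rcases lt_or_gt_of_ne h with hlt | hgt
    · exact h2 hlt
    · exact h1 hgt
  -- inverse of a diagonal block
  have hDinvblock : ∀ i, D⁻¹.toSquareBlock b i = (D.toSquareBlock b i)⁻¹ := by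
    intro i
    refine (Matrix.inv_eq_right_inv ?_).symm
    have hmul := Matrix.toBlock_mul_eq_add (fun x : S => b x = i) (fun x : S => b x = i)
      (fun x : S => b x = i) D D⁻¹
    rw [Matrix.mul_nonsing_inv D (isUnit_iff_ne_zero.2 hdetDne), Matrix.toBlock_one_self] at hmul
    have hz : (D.toBlock (fun x : S => b x = i) fun x => ¬ b x = i) = 0 := by
      ext x y
      exact hD0 x.1 y.1 (by rw [x.2]; exact fun hh => y.2 hh.symm)
    rw [hz, Matrix.zero_mul, add_zero] at hmul
    exact hmul.symm
  -- the erased-block determinant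
  let Q : Fin k → F := fun i =>
    (M.submatrix (fun x : {x // x ∈ (C i).erase (w i)} => x.1)
      (fun x : {x // x ∈ (C i).erase (w i)} => x.1)).det
  have hdiag : ∀ i, D⁻¹ (wS i) (wS i) = Q i / (N i).det := by
    intro i
    have h1 : D⁻¹ (wS i) (wS i) = (D⁻¹.toSquareBlock b i) ⟨wS i, hwb i⟩ ⟨wS i, hwb i⟩ := rfl
    rw [h1, hDinvblock i, hblock i, Matrix.inv_submatrix_equiv (N i) (eB i) (eB i)]
    have he : (eB i) ⟨wS i, hwb i⟩ = ⟨w i, hwC i⟩ := rfl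
    rw [Matrix.submatrix_apply, he]
    rw [Matrix.inv_def, Matrix.smul_apply, adjugate_diag_eq (N i) ⟨w i, hwC i⟩,
      Ring.inverse_eq_inv]
    have heq : ((N i).submatrix
        (fun a : {a : {x // x ∈ C i} // a ≠ ⟨w i, hwC i⟩} => a.1)
        (fun a : {a : {x // x ∈ C i} // a ≠ ⟨w i, hwC i⟩} => a.1)).det = Q i := by
      let eE : {a : {x // x ∈ C i} // a ≠ ⟨w i, hwC i⟩} ≃ {x // x ∈ (C i).erase (w i)} :=
        { toFun := fun a => ⟨a.1.1, Finset.mem_erase.2 ⟨fun h => a.2 (Subtype.ext h), a.1.2⟩⟩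
          invFun := fun x => ⟨⟨x.1, (Finset.mem_erase.1 x.2).2⟩,
            fun h => (Finset.mem_erase.1 x.2).1 (congrArg Subtype.val h)⟩
          left_inv := fun a => Subtype.ext (Subtype.ext rfl)
          right_inv := fun x => rfl }
      have : (N i).submatrix
          (fun a : {a : {x // x ∈ C i} // a ≠ ⟨w i, hwC i⟩} => a.1)
          (fun a : {a : {x // x ∈ C i} // a ≠ ⟨w i, hwC i⟩} => a.1) =
          (M.submatrix (fun x : {x // x ∈ (C i).erase (w i)} => x.1)
            (fun x : {x // x ∈ (C i).erase (w i)} => x.1)).submatrix eE eE := rfl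
      rw [this, Matrix.det_submatrix_equiv_self]
    rw [heq]
    rw [smul_eq_mul, inv_mul_eq_div]
  -- reduction of sums over S to sums over the attaching vertices
  have hinjS : Function.Injective wS := fun i j h => hw (congrArg Subtype.val h)
  have hsum_red : ∀ (g : S → F), (∀ y : S, (∀ i, y.1 ≠ w i) → g y = 0) →
      ∑ y : S, g y = ∑ i, g (wS i) := by
    intro g hg
    have himg : ∑ x ∈ Finset.univ.image wS, g x = ∑ i : Fin k, g (wS i) :=
      Finset.sum_image (fun i _ j _ h => hinjS h)
    rw [← himg]
    refine (Finset.sum_subset (Finset.subset_univ _) fun y _ hy => hg y fun i hyw => ?_).symm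
    exact hy (Finset.mem_image.2 ⟨i, Finset.mem_univ _, Subtype.ext hyw.symm⟩)
  -- the Schur complement expansion at `v`
  have hdet1 : ∀ (inst1 : DecidableEq {a : V // a = v}) (inst2 : Fintype {a : V // a = v})
      (A : Matrix {a : V // a = v} {a : V // a = v} F),
      @Matrix.det _ inst1 inst2 _ _ A = A ⟨v, rfl⟩ ⟨v, rfl⟩ := by
    intro inst1 inst2 A
    haveI : Subsingleton {a : V // a = v} := ⟨fun x y => Subtype.ext (x.2.trans y.2.symm)⟩
    exact Matrix.det_eq_elem_of_subsingleton A ⟨v, rfl⟩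
  have hsplit : M.det = D.det * (M v v - ∑ i, t * D⁻¹ (wS i) (wS i)) := by
    letI : Fintype {a : V // a = v} := Subtype.fintype _
    rw [Matrix.det_toBlock M (fun a => a = v)]
    rw [Matrix.det_fromBlocks₂₂]
    congr 1
    rw [hdet1]
    rw [Matrix.invOf_eq_nonsing_inv]
    rw [Matrix.sub_apply]
    congr 1
    · rw [Matrix.mul_assoc, Matrix.mul_apply]
      have hterm : ∀ x : S, (M.toBlock (fun a => a = v) (fun a => ¬ a = v)) ⟨v, rfl⟩ x *
            ((D⁻¹ * M.toBlock (fun a => ¬ a = v) (fun a => a = v)) x ⟨v, rfl⟩) =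
          M v x.1 * ∑ y : S, D⁻¹ x y * M y.1 v := by
        intro x
        rw [Matrix.mul_apply]
        rfl
      rw [Finset.sum_congr rfl fun x _ => hterm x]
      rw [hsum_red _ (fun y hy => by rw [hrow y.1 y.2 hy, zero_mul])]
      refine Finset.sum_congr rfl fun i _ => ?_
      rw [hsum_red _ (fun y hy => by rw [hcol y.1 y.2 hy, mul_zero])]
      rw [Finset.sum_eq_single i (fun j _ hji => by
        rw [hDinv0 (wS i) (wS j) (by rw [hwb i, hwb j]; exact fun h => hji h.symm), zero_mul])
        (fun h => absurd (Finset.mem_univ i) h)]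
      rw [← hprod i]; ring
  rw [hsplit, hdetD, mul_sub, Finset.mul_sum]
  congr 1
  · exact mul_comm _ _
  · rw [Finset.mul_sum]
    refine Finset.sum_congr rfl fun i _ => ?_
    rw [hdiag i]
    have hpe : (N i).det * ∏ j ∈ Finset.univ.erase i, (N j).det = ∏ j, (N j).det :=
      Finset.mul_prod_erase Finset.univ (fun j => (N j).det) (Finset.mem_univ i)
    rw [← hpe]
    have hne : (N i).det ≠ 0 := hPne i
    rw [div_eq_mul_inv]
    have hc : (N i).det * (N i).det⁻¹ = 1 := mul_inv_cancel₀ hne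
    linear_combination (t * Q i * ∏ j ∈ Finset.univ.erase i, (N j).det) * hc

end DetLemmas

section GraphFacts

variable {V : Type} [DecidableEq V] (G : SimpleGraph V) (v : V)

lemma delete_isolated (u : V) : ¬ (G.deleteEdges (G.incidenceSet v)).Adj v u := by
  intro h
  rw [SimpleGraph.deleteEdges_adj] at h
  exact h.2 ((SimpleGraph.mk'_mem_incidenceSet_left_iff G).2 h.1)

lemma delete_not_reach (u : V) (hu : u ≠ v) :
    ¬ (G.deleteEdges (G.incidenceSet v)).Reachable v u := by
  rintro ⟨p⟩
  cases p with
  | nil => exact hu rfl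
  | cons h _ => exact delete_isolated G v _ h

variable {k : ℕ} (w : Fin k → V)

lemma join_walk_reach (x y : V) (p : G.Walk x y) : y = v →
    (∀ u, G.Adj v u ↔ ∃ i, u = w i) →
    x = v ∨ ∃ i, (G.deleteEdges (G.incidenceSet v)).Reachable (w i) x := by
  induction p with
  | nil => exact fun h _ => Or.inl h
  | @cons x b y h q ih =>
    intro hy hadj
    rcases ih hy hadj with hb | ⟨i, hr⟩
    · obtain ⟨i, hi⟩ := (hadj x).1 (hb ▸ h).symm
      exact Or.inr ⟨i, hi ▸ SimpleGraph.Reachable.refl _⟩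
    · by_cases hx : x = v
      · exact Or.inl hx
      · have hbv : b ≠ v := by
          intro hb
          exact delete_not_reach G v (w i) ((hadj (w i)).2 ⟨i, rfl⟩).ne' (hb ▸ hr).symm
        refine Or.inr ⟨i, hr.trans (SimpleGraph.Adj.reachable ?_)⟩
        rw [SimpleGraph.deleteEdges_adj]
        refine ⟨h.symm, fun hmem => ?_⟩
        rw [SimpleGraph.mk'_mem_incidenceSet_iff] at hmem
        rcases hmem.2 with h1 | h1
        · exact hbv h1.symm
        · exact hx h1.symm

variable (C : Fin k → Finset V)

lemma join_cover (hT : G.Connected)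
    (hadj : ∀ u, G.Adj v u ↔ ∃ i, u = w i)
    (hC : ∀ i u, u ∈ C i ↔ (G.deleteEdges (G.incidenceSet v)).Reachable (w i) u)
    (u : V) (hu : u ≠ v) : ∃ i, u ∈ C i := by
  rcases join_walk_reach G v w u v (hT.1 u v).some rfl hadj with rfl | ⟨i, hr⟩
  · exact absurd rfl hu
  · exact ⟨i, (hC i u).2 hr⟩

lemma join_mem_ne (hC : ∀ i u, u ∈ C i ↔ (G.deleteEdges (G.incidenceSet v)).Reachable (w i) u)
    (hwv : ∀ i : Fin k, w i ≠ v) {i : Fin k} {u : V} (hu : u ∈ C i) : u ≠ v := by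
  intro h
  exact delete_not_reach G v (w i) (hwv i) (h ▸ (hC i u).1 hu).symm

lemma join_disjoint (hT : G.IsTree) (hw : Function.Injective w)
    (hadj : ∀ u, G.Adj v u ↔ ∃ i, u = w i)
    (hC : ∀ i u, u ∈ C i ↔ (G.deleteEdges (G.incidenceSet v)).Reachable (w i) u)
    (i j : Fin k) (u : V) (hi : u ∈ C i) (hj : u ∈ C j) : i = j := by
  by_contra hij
  have hr : (G.deleteEdges (G.incidenceSet v)).Reachable (w i) (w j) :=
    ((hC i u).1 hi).trans ((hC j u).1 hj).symm
  -- a path in the deleted graph avoiding `v`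
  obtain ⟨p0⟩ := hr
  let P := p0.toPath
  have hPv : v ∉ P.1.support := by
    intro hv
    have : (G.deleteEdges (G.incidenceSet v)).Reachable (w i) v := ⟨P.1.takeUntil v hv⟩
    exact delete_not_reach G v (w i) ((hadj (w i)).2 ⟨i, rfl⟩).ne' this.symm
  let pg : G.Walk (w i) (w j) := P.1.mapLe (SimpleGraph.deleteEdges_le _)
  have hpg : pg.IsPath := P.2.mapLe _
  have hpgsup : pg.support = P.1.support := by
    simp only [pg, SimpleGraph.Walk.mapLe, SimpleGraph.Walk.support_map]
    exact List.map_id' _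
  have hvi : G.Adj v (w i) := (hadj (w i)).2 ⟨i, rfl⟩
  have hvj : G.Adj v (w j) := (hadj (w j)).2 ⟨j, rfl⟩
  -- two distinct paths from `v` to `w j`
  have hpath2 : (SimpleGraph.Walk.cons hvi pg).IsPath := by
    rw [SimpleGraph.Walk.cons_isPath_iff]
    exact ⟨hpg, by rw [hpgsup]; exact hPv⟩
  have hpath1 : (SimpleGraph.Walk.cons hvj SimpleGraph.Walk.nil).IsPath := by
    rw [SimpleGraph.Walk.cons_isPath_iff]
    simp [hvj.ne]
  obtain ⟨q, -, hun⟩ := hT.existsUnique_path v (w j)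
  have heq := (hun _ hpath2).trans (hun _ hpath1).symm
  have hsup := congrArg SimpleGraph.Walk.support heq
  rw [SimpleGraph.Walk.support_cons, SimpleGraph.Walk.support_cons,
    SimpleGraph.Walk.support_nil] at hsup
  have : pg.support = [w j] := by
    injection hsup
  have h2 := SimpleGraph.Walk.support_eq_cons pg
  rw [this] at h2
  exact hij (hw (by injection h2 with h3 _; exact h3.symm))

end GraphFacts

/- `G` is a tree which is the join of the trees `T⁽¹⁾,…,T⁽ᵏ⁾` at the vertices
`w 1, …, w k`: the new vertex `v` is joined exactly to the vertices `w i`, and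
`C i` is the vertex set of `T⁽ⁱ⁾`, the connected component of `w i` in the
forest obtained from `G` by deleting all edges incident to `v`. -/

/-- The Coxeter polynomial of the join `T` of trees `T⁽¹⁾,…,T⁽ᵏ⁾` at vertices
`w 1,…,w k` satisfies
`cox_T(t) = (t+1)·∏ᵢ cox_{T⁽ⁱ⁾}(t) − t·∑ᵢ Pᵢ(t)`, where
`Pᵢ(t) = cox_{T̃⁽ⁱ⁾}(t)·∏_{j≠i} cox_{T⁽ʲ⁾}(t)` and `T̃⁽ⁱ⁾ = T⁽ⁱ⁾ − w i`. -/
theorem coxPoly_join {V : Type} [Fintype V] [LinearOrder V]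
    (G : SimpleGraph V) [DecidableRel G.Adj] (hT : G.IsTree)
    (k : ℕ) (v : V) (w : Fin k → V) (hw : Function.Injective w)
    (hadj : ∀ u, G.Adj v u ↔ ∃ i, u = w i)
    (C : Fin k → Finset V)
    (hC : ∀ i u, u ∈ C i ↔ (G.deleteEdges (G.incidenceSet v)).Reachable (w i) u) :
    coxOf G Finset.univ =
      (X + 1) * ∏ i, coxOf G (C i) -
        X * ∑ i, (coxOf G ((C i).erase (w i)) *
          ∏ j ∈ Finset.univ.erase i, coxOf G (C j)) := by
  -- graph-theoretic facts
  have hvw : ∀ i, G.Adj v (w i) := fun i => (hadj (w i)).2 ⟨i, rfl⟩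
  have hwv : ∀ i, w i ≠ v := fun i => (hvw i).ne'
  have hwC : ∀ i, w i ∈ C i := fun i => (hC i (w i)).2 (SimpleGraph.Reachable.refl _)
  have hmemne : ∀ {i : Fin k} {u : V}, u ∈ C i → u ≠ v :=
    fun h => join_mem_ne G v w C hC hwv h
  have hvC : ∀ i, v ∉ C i := fun i h => (hmemne h) rfl
  have hcover : ∀ a, a ≠ v → ∃ i, a ∈ C i :=
    join_cover G v w C hT.isConnected hadj hC
  have hdisj : ∀ i j a, a ∈ C i → a ∈ C j → i = j :=
    fun i j a ha hb => join_disjoint G v w C hT hw hadj hC i j a ha hb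
  have hcross : ∀ i j a a', i ≠ j → a ∈ C i → a' ∈ C j → ¬ G.Adj a a' := by
    intro i j a a' hij ha ha' hadj'
    have h1 : (G.deleteEdges (G.incidenceSet v)).Adj a a' := by
      rw [SimpleGraph.deleteEdges_adj]
      refine ⟨hadj', fun hm => ?_⟩
      rw [SimpleGraph.mk'_mem_incidenceSet_iff] at hm
      rcases hm.2 with h | h
      · exact (hmemne ha) h.symm
      · exact (hmemne ha') h.symm
    have : a' ∈ C i := (hC i a').2 (((hC i a).1 ha).trans h1.reachable)
    exact hij (hdisj i j a' this ha')
  -- move to the fraction field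
  set K := FractionRing (Polynomial ℤ) with hK
  set φ := algebraMap (Polynomial ℤ) K with hφ
  have hφinj : Function.Injective φ := IsFractionRing.injective _ _
  set MK : Matrix V V K := (coxMat G).map φ with hMK
  have hdetmap : ∀ s : Finset V, φ (coxOf G s) =
      (MK.submatrix (fun x : {x // x ∈ s} => x.1) (fun x : {x // x ∈ s} => x.1)).det := by
    intro s
    rw [coxOf_eq_det, RingHom.map_det]
    congr 1
  have hmonic : ∀ s : Finset V, (coxOf G s).Monic := fun s => Matrix.charpoly_monic _
  -- hypotheses of the determinant lemma
  have hcrossM : ∀ i j a a', i ≠ j → a ∈ C i → a' ∈ C j → MK a a' = 0 := by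
    intro i j a a' hij ha ha'
    have hne : a ≠ a' := fun h => hij (hdisj i j a ha (h ▸ ha'))
    have : coxMat G a a' = 0 := by
      simp only [coxMat]
      rw [if_neg hne, if_neg (hcross i j a a' hij ha ha')]
    rw [hMK, Matrix.map_apply, this, map_zero]
  have hrowM : ∀ a, a ≠ v → (∀ i, a ≠ w i) → MK v a = 0 := by
    intro a hav hnw
    have hna : ¬ G.Adj v a := fun h => by
      obtain ⟨i, hi⟩ := (hadj a).1 h
      exact hnw i hi
    have : coxMat G v a = 0 := by
      simp only [coxMat]; rw [if_neg (Ne.symm hav), if_neg hna]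
    rw [hMK, Matrix.map_apply, this, map_zero]
  have hcolM : ∀ a, a ≠ v → (∀ i, a ≠ w i) → MK a v = 0 := by
    intro a hav hnw
    have hna : ¬ G.Adj a v := fun h => by
      obtain ⟨i, hi⟩ := (hadj a).1 h.symm
      exact hnw i hi
    have : coxMat G a v = 0 := by
      simp only [coxMat]; rw [if_neg hav, if_neg hna]
    rw [hMK, Matrix.map_apply, this, map_zero]
  have hprodM : ∀ i, MK v (w i) * MK (w i) v = φ X := by
    intro i
    have hint : coxMat G v (w i) * coxMat G (w i) v = X := by
      simp only [coxMat]
      rcases lt_trichotomy v (w i) with h | h | h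
      · rw [if_neg (hwv i).symm, if_neg (hwv i), if_pos (hvw i), if_pos ((hvw i).symm),
          if_pos h, if_neg (not_lt.2 h.le)]
        ring
      · exact absurd h.symm (hwv i)
      · rw [if_neg (hwv i).symm, if_neg (hwv i), if_pos (hvw i), if_pos ((hvw i).symm),
          if_neg (not_lt.2 h.le), if_pos h]
        ring
    rw [hMK, Matrix.map_apply, Matrix.map_apply, ← _root_.map_mul, hint]
  have hPneM : ∀ i, (MK.submatrix (fun x : {x // x ∈ C i} => x.1)
      (fun x : {x // x ∈ C i} => x.1)).det ≠ 0 := by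
    intro i
    rw [← hdetmap (C i)]
    exact fun h => (hmonic (C i)).ne_zero (hφinj (by rw [h, map_zero]))
  have main := det_join MK (φ X) v k w hw C hwv hwC hvC hcover hdisj hcrossM hrowM hcolM
    hprodM hPneM
  -- conclude by injectivity
  apply hφinj
  have hU : φ (coxOf G Finset.univ) = MK.det := by
    rw [hdetmap Finset.univ]
    have he : MK.submatrix (fun x : {x // x ∈ (Finset.univ : Finset V)} => x.1)
        (fun x : {x // x ∈ (Finset.univ : Finset V)} => x.1) =
        MK.submatrix (Equiv.subtypeUnivEquiv (fun x => Finset.mem_univ x))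
          (Equiv.subtypeUnivEquiv (fun x => Finset.mem_univ x)) := rfl
    rw [he, Matrix.det_submatrix_equiv_self]
  rw [hU, main]
  have hvv : MK v v = φ X + 1 := by
    have : coxMat G v v = X + 1 := by simp [coxMat]
    rw [hMK, Matrix.map_apply, this, _root_.map_add, _root_.map_one]
  rw [hvv]
  simp only [_root_.map_sub, _root_.map_mul, _root_.map_add, _root_.map_one, map_prod, map_sum, hdetmap]
end
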